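/- The complete graph K_7 on seven vertices cannot be vertex-partitioned into two triangle-forests: for every subset S of the vertex set of K_7, it is not the case that both the subgraph induced on S and the subgraph induced on the complement of S are triangle-forests. -/

import Mathlib

/-- A graph is a *triangle-forest* if every cycle in it has length exactly three
(equivalently, it has no cycles of length at least four). -/
def SimpleGraph.IsTriangleForest {V : Type*} (G : SimpleGraph V) : Prop :=
  ∀ (v : V) (c : G.Walk v v), c.IsCycle → c.length = 3

open SimpleGraph

lemma four_elts {α : Type*} [DecidableEq α] (s : Finset α) (h : 4 ≤ s.card) :
    ∃ a b c d, a ∈ s ∧ b ∈ s ∧ c ∈ s ∧ d ∈ s ∧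
      a ≠ b ∧ a ≠ c ∧ a ≠ d ∧ b ≠ c ∧ b ≠ d ∧ c ≠ d := by
  obtain ⟨t, hts, ht⟩ := Finset.exists_subset_card_eq h
  rw [show (4:ℕ) = 3+1 from rfl, Finset.card_eq_succ] at ht
  obtain ⟨a, u, hau, heq, hu⟩ := ht
  rw [← heq] at hts
  obtain ⟨b, c, d, hbc, hbd, hcd, rfl⟩ := Finset.card_eq_three.mp hu
  simp only [Finset.mem_insert, Finset.mem_singleton] at hau
  push_neg at hau
  refine ⟨a, b, c, d, ?_, ?_, ?_, ?_, hau.1, hau.2.1, hau.2.2, hbc, hbd, hcd⟩ <;>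
    apply hts <;> simp

lemma top_cycle4 {β : Type*} (a b c d : β)
    (hab : a ≠ b) (hac : a ≠ c) (had : a ≠ d) (hbc : b ≠ c) (hbd : b ≠ d) (hcd : c ≠ d) :
    ∃ (w : (⊤ : SimpleGraph β).Walk a a), w.IsCycle ∧ w.length = 4 := by
  refine ⟨.cons hab (.cons hbc (.cons hcd (.cons had.symm .nil))), ?_, rfl⟩
  constructor
  · constructor
    · simp [Walk.isTrail_def, Sym2.eq, Sym2.rel_iff', hab, hac, had, hbc, hbd, hcd,
        hab.symm, hac.symm, had.symm, hbc.symm, hbd.symm, hcd.symm]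
    · simp
  · simp [hbc, hbd, hcd, hab.symm, hac.symm, had.symm]

lemma induce_complete_not_forest {V : Type*} (T : Set V) (a b c d : V)
    (ha : a ∈ T) (hb : b ∈ T) (hc : c ∈ T) (hd : d ∈ T)
    (hab : a ≠ b) (hac : a ≠ c) (had : a ≠ d) (hbc : b ≠ c) (hbd : b ≠ d) (hcd : c ≠ d) :
    ¬ ((completeGraph V).induce T).IsTriangleForest := by
  have hG : ((completeGraph V).induce T) = ⊤ := by
    ext ⟨x, hx⟩ ⟨y, hy⟩
    simp [completeGraph, Subtype.ext_iff]
  intro hF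
  obtain ⟨w, hw, hlen⟩ := top_cycle4 (⟨a, ha⟩ : T) ⟨b, hb⟩ ⟨c, hc⟩ ⟨d, hd⟩
    (by simpa [Subtype.ext_iff] using hab) (by simpa [Subtype.ext_iff] using hac)
    (by simpa [Subtype.ext_iff] using had) (by simpa [Subtype.ext_iff] using hbc)
    (by simpa [Subtype.ext_iff] using hbd) (by simpa [Subtype.ext_iff] using hcd)
  rw [hG] at hF
  have := hF _ w hw
  omega

/-- The complete graph `K₇` cannot be vertex-partitioned into two triangle-forests:
for no subset `S` of the vertices are both the subgraph induced on `S` and the subgraph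
induced on its complement triangle-forests. -/
theorem K7_no_bipartition_into_triangleForests (S : Set (Fin 7)) :
    ¬ (((completeGraph (Fin 7)).induce S).IsTriangleForest ∧
       ((completeGraph (Fin 7)).induce Sᶜ).IsTriangleForest) := by
  classical
  rintro ⟨h1, h2⟩
  set s : Finset (Fin 7) := Finset.univ.filter (fun x => x ∈ S) with hs
  set t : Finset (Fin 7) := Finset.univ.filter (fun x => x ∉ S) with ht
  have hcard : s.card + t.card = 7 := by
    rw [hs, ht]
    simpa using Finset.card_filter_add_card_filter_not
      (s := Finset.univ) (p := fun x => x ∈ S)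
  rcases le_or_gt 4 s.card with h | h
  · obtain ⟨a, b, c, d, ha, hb, hc, hd, hab, hac, had, hbc, hbd, hcd⟩ := four_elts s h
    simp only [hs, Finset.mem_filter] at ha hb hc hd
    exact induce_complete_not_forest S a b c d ha.2 hb.2 hc.2 hd.2
      hab hac had hbc hbd hcd h1
  · have h4 : 4 ≤ t.card := by omega
    obtain ⟨a, b, c, d, ha, hb, hc, hd, hab, hac, had, hbc, hbd, hcd⟩ := four_elts t h4
    simp only [ht, Finset.mem_filter] at ha hb hc hd
    exact induce_complete_not_forest Sᶜ a b c d ha.2 hb.2 hc.2 hd.2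
      hab hac had hbc hbd hcd h2
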